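/- Let $\varphi$ and $\phi$ be Orlicz integrands on $\Omega \times X$ such that there exist $L > 0$ and $f \in L_1(\mu)$ with $\varphi(\omega, x) \le \phi(\omega, L x) + f(\omega)$ for a.e. $\omega$ and all $x$. Then for every $u \in L_\phi(\mu)$ one has $u \in L_\varphi(\mu)$ and $\vvvert u \vvvert_\varphi \le L (1 + \|f\|_{L_1}) \vvvert u \vvvert_\phi$, where $\vvvert u \vvvert_\psi = \inf_{\alpha > 0} \alpha^{-1}[1 + I_\psi(\alpha u)]$ is the Amemiya norm and $I_\psi(u) = \int \psi(\omega, u(\omega))\, d\mu(\omega)$. -/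

import Mathlib

open MeasureTheory Filter Topology ENNReal

/-- An Orlicz integrand `φ : Ω × X → [0,∞]`: for a.e. `ω` the partial map `φ ω` is an
Orlicz function (even, convex, lsc, proper, vanishing continuously at the origin and
tending to `∞` at infinity), and `φ` is measurable in the sense that its composition
with any strongly measurable function is measurable. -/
structure IsOrliczIntegrand {Ω X : Type*} [MeasurableSpace Ω]
    [NormedAddCommGroup X] [NormedSpace ℝ X]
    (μ : Measure Ω) (φ : Ω → X → ℝ≥0∞) : Prop where
  ae_even : ∀ᵐ ω ∂μ, ∀ x : X, φ ω (-x) = φ ω x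
  ae_convex : ∀ᵐ ω ∂μ, ∀ x y : X, ∀ a b : ℝ, 0 ≤ a → 0 ≤ b → a + b = 1 →
    φ ω (a • x + b • y) ≤ ENNReal.ofReal a * φ ω x + ENNReal.ofReal b * φ ω y
  ae_lsc : ∀ᵐ ω ∂μ, LowerSemicontinuous (φ ω)
  ae_proper : ∀ᵐ ω ∂μ, ∃ x, φ ω x ≠ ⊤
  ae_zero : ∀ᵐ ω ∂μ, Tendsto (φ ω) (nhds 0) (nhds 0)
  ae_coercive : ∀ᵐ ω ∂μ, Tendsto (φ ω) (Filter.comap norm Filter.atTop) (nhds ⊤)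
  meas_comp : ∀ u : Ω → X, StronglyMeasurable u → Measurable fun ω => φ ω (u ω)

/-- The Orlicz modular `I_φ(u) = ∫ φ(ω, u(ω)) dμ(ω)`. -/
noncomputable def orliczModular {Ω X : Type*} [MeasurableSpace Ω]
    (μ : Measure Ω) (φ : Ω → X → ℝ≥0∞) (u : Ω → X) : ℝ≥0∞ :=
  ∫⁻ ω, φ ω (u ω) ∂μ

/-- The Luxemburg norm `‖u‖_φ = inf {α > 0 : I_φ(u/α) ≤ 1}`. -/
noncomputable def luxNorm {Ω X : Type*} [MeasurableSpace Ω]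
    [NormedAddCommGroup X] [NormedSpace ℝ X]
    (μ : Measure Ω) (φ : Ω → X → ℝ≥0∞) (u : Ω → X) : ℝ≥0∞ :=
  ⨅ a : {a : ℝ // 0 < a ∧ orliczModular μ φ (fun ω => a⁻¹ • u ω) ≤ 1},
    ENNReal.ofReal a

/-- Membership in the Orlicz space `L_φ(μ)`: strongly measurable with finite
Luxemburg norm. -/
def MemOrlicz {Ω X : Type*} [MeasurableSpace Ω]
    [NormedAddCommGroup X] [NormedSpace ℝ X]
    (μ : Measure Ω) (φ : Ω → X → ℝ≥0∞) (u : Ω → X) : Prop :=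
  StronglyMeasurable u ∧ luxNorm μ φ u < ⊤

/-- The Amemiya norm `⦀u⦀_φ = inf_{α>0} α⁻¹ (1 + I_φ(α u))`. -/
noncomputable def amemiyaNorm {Ω X : Type*} [MeasurableSpace Ω]
    [NormedAddCommGroup X] [NormedSpace ℝ X]
    (μ : Measure Ω) (φ : Ω → X → ℝ≥0∞) (u : Ω → X) : ℝ≥0∞ :=
  ⨅ a : {a : ℝ // 0 < a},
    ENNReal.ofReal (a : ℝ)⁻¹ * (1 + orliczModular μ φ (fun ω => (a : ℝ) • u ω))

/-- Embedding lemma between Orlicz spaces: if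
`φ(ω,x) ≤ ψ(ω, L x) + f(ω)` with `f ∈ L₁(μ)`, then `L_ψ(μ) ⊆ L_φ(μ)` with
`⦀u⦀_φ ≤ L (1 + ‖f‖_{L₁}) ⦀u⦀_ψ`. -/
theorem orlicz_embedding {Ω X : Type*} [MeasurableSpace Ω]
    [NormedAddCommGroup X] [NormedSpace ℝ X]
    (μ : Measure Ω) (φ ψ : Ω → X → ℝ≥0∞)
    (hφ : IsOrliczIntegrand μ φ) (hψ : IsOrliczIntegrand μ ψ)
    (L : ℝ) (hL : 0 < L)
    (f : Ω → ℝ≥0∞) (hf : Measurable f) (hf1 : ∫⁻ ω, f ω ∂μ < ⊤)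
    (hdom : ∀ᵐ ω ∂μ, ∀ x : X, φ ω x ≤ ψ ω (L • x) + f ω)
    (u : Ω → X) (hu : MemOrlicz μ ψ u) :
    MemOrlicz μ φ u ∧
      amemiyaNorm μ φ u ≤
        ENNReal.ofReal L * (1 + ∫⁻ ω, f ω ∂μ) * amemiyaNorm μ ψ u := by
  obtain ⟨hum, hlux⟩ := hu
  set F := ∫⁻ ω, f ω ∂μ with hF
  -- φ ω 0 = 0 a.e.
  have hφ0 : ∀ᵐ ω ∂μ, φ ω 0 = 0 := by
    filter_upwards [hφ.ae_zero] with ω h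
    by_contra h0
    have hpos : 0 < φ ω 0 := pos_iff_ne_zero.mpr h0
    have hev : ∀ᶠ z in nhds (0 : X), φ ω z < φ ω 0 := h.eventually (gt_mem_nhds hpos)
    exact lt_irrefl _ hev.self_of_nhds
  -- key domination of modulars
  have key : ∀ c : ℝ, orliczModular μ φ (fun ω => c • u ω) ≤
      orliczModular μ ψ (fun ω => (L * c) • u ω) + F := by
    intro c
    rw [orliczModular, orliczModular, hF, ← lintegral_add_right _ hf]
    refine lintegral_mono_ae ?_
    filter_upwards [hdom] with ω h
    simpa [smul_smul] using h (c • u ω)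
  -- convexity scaling: I_φ(t • v) ≤ t * I_φ(v) for 0 ≤ t ≤ 1
  have scale : ∀ (t : ℝ), 0 ≤ t → t ≤ 1 → ∀ v : Ω → X,
      orliczModular μ φ (fun ω => t • v ω) ≤
        ENNReal.ofReal t * orliczModular μ φ v := by
    intro t ht0 ht1 v
    rw [orliczModular, orliczModular, ← lintegral_const_mul' _ _ ENNReal.ofReal_ne_top]
    refine lintegral_mono_ae ?_
    filter_upwards [hφ.ae_convex, hφ0] with ω hconv h0
    have := hconv (v ω) 0 t (1 - t) ht0 (by linarith) (by ring)
    simpa [h0] using this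
  -- membership
  have hmem : MemOrlicz μ φ u := by
    refine ⟨hum, ?_⟩
    -- get b with I_ψ(b⁻¹ u) ≤ 1
    have hne : Nonempty {a : ℝ // 0 < a ∧ orliczModular μ ψ (fun ω => a⁻¹ • u ω) ≤ 1} := by
      by_contra h
      rw [not_nonempty_iff] at h
      haveI := h
      have : luxNorm μ ψ u = ⊤ := by
        simp only [luxNorm]
        exact iInf_of_empty _
      rw [this] at hlux
      exact lt_irrefl _ hlux
    obtain ⟨b, hb, hbmod⟩ := hne.some
    set N : ℝ≥0∞ := 1 + F with hN
    have hN0 : N ≠ 0 := by simp [hN]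
    have hNtop : N ≠ ⊤ := by
      simp only [hN]
      exact (ENNReal.add_lt_top.mpr ⟨ENNReal.one_lt_top, hf1⟩).ne
    set t : ℝ := N.toReal⁻¹ with htdef
    have hNt1 : 1 ≤ N.toReal := by
      rw [← ENNReal.toReal_one]
      exact ENNReal.toReal_mono hNtop (by simp [hN])
    have ht0 : 0 < t := by positivity
    have ht1 : t ≤ 1 := by
      rw [htdef]
      exact inv_le_one_of_one_le₀ hNt1
    -- I_φ((L*b)⁻¹ u) ≤ 1 + F
    have h1 : orliczModular μ φ (fun ω => (L * b)⁻¹ • u ω) ≤ N := by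
      have := key (L * b)⁻¹
      have hLb : L * (L * b)⁻¹ = b⁻¹ := by
        field_simp
      rw [hLb] at this
      exact this.trans (by rw [hN]; exact add_le_add_left hbmod F)
    -- scale down by t
    have h2 : orliczModular μ φ (fun ω => (t * (L * b)⁻¹) • u ω) ≤ 1 := by
      have hs := scale t ht0.le ht1 (fun ω => (L * b)⁻¹ • u ω)
      simp only [smul_smul] at hs
      refine hs.trans ?_
      have : ENNReal.ofReal t * orliczModular μ φ (fun ω => (L * b)⁻¹ • u ω) ≤
          ENNReal.ofReal t * N := mul_le_mul_right h1 _
      refine this.trans_eq ?_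
      rw [htdef, ENNReal.ofReal_inv_of_pos (ENNReal.toReal_pos hN0 hNtop),
        ENNReal.ofReal_toReal hNtop]
      exact ENNReal.inv_mul_cancel hN0 hNtop
    set a : ℝ := (t * (L * b)⁻¹)⁻¹ with hadef
    have ha : 0 < a := by
      rw [hadef]; positivity
    have hainv : a⁻¹ = t * (L * b)⁻¹ := by rw [hadef, inv_inv]
    have : luxNorm μ φ u ≤ ENNReal.ofReal a := by
      simp only [luxNorm]
      exact iInf_le _ (⟨a, ha, by rw [hainv]; exact h2⟩ :
        {c : ℝ // 0 < c ∧ orliczModular μ φ (fun ω => c⁻¹ • u ω) ≤ 1})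
    exact this.trans_lt ENNReal.ofReal_lt_top
  refine ⟨hmem, ?_⟩
  -- Amemiya inequality
  set C : ℝ≥0∞ := ENNReal.ofReal L * (1 + F) with hC
  have hC0 : C ≠ 0 := by
    simp [hC, ENNReal.ofReal_eq_zero, not_le, hL]
  have hCtop : C ≠ ⊤ := by
    exact ENNReal.mul_ne_top ENNReal.ofReal_ne_top
      (ENNReal.add_lt_top.mpr ⟨ENNReal.one_lt_top, hf1⟩).ne
  have main : ∀ a : {a : ℝ // 0 < a}, amemiyaNorm μ φ u ≤
      C * (ENNReal.ofReal ((a : ℝ))⁻¹ *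
        (1 + orliczModular μ ψ (fun ω => (a : ℝ) • u ω))) := by
    rintro ⟨a, ha⟩
    have step1 : amemiyaNorm μ φ u ≤ ENNReal.ofReal (a / L)⁻¹ *
        (1 + orliczModular μ φ (fun ω => (a / L) • u ω)) := by
      simp only [amemiyaNorm]
      exact iInf_le _ (⟨a / L, div_pos ha hL⟩ : {c : ℝ // 0 < c})
    have hLa : L * (a / L) = a := by field_simp
    have step2 : orliczModular μ φ (fun ω => (a / L) • u ω) ≤
        orliczModular μ ψ (fun ω => a • u ω) + F := by
      have := key (a / L)
      rwa [hLa] at this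
    have hinv : ENNReal.ofReal (a / L)⁻¹ = ENNReal.ofReal L * ENNReal.ofReal a⁻¹ := by
      rw [← ENNReal.ofReal_mul hL.le]
      congr 1
      field_simp
    set I : ℝ≥0∞ := orliczModular μ ψ (fun ω => a • u ω) with hI
    calc amemiyaNorm μ φ u
        ≤ ENNReal.ofReal (a / L)⁻¹ * (1 + orliczModular μ φ (fun ω => (a / L) • u ω)) := step1
      _ ≤ ENNReal.ofReal L * ENNReal.ofReal a⁻¹ * (1 + (I + F)) := by
          rw [hinv]; exact mul_le_mul_right (add_le_add_right step2 1) _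
      _ ≤ ENNReal.ofReal L * ENNReal.ofReal a⁻¹ * ((1 + F) * (1 + I)) := by
          refine mul_le_mul_right ?_ _
          have : (1 + F) * (1 + I) = (1 + (I + F)) + F * I := by ring
          rw [this]; exact le_self_add
      _ = C * (ENNReal.ofReal a⁻¹ * (1 + I)) := by rw [hC]; ring
  calc amemiyaNorm μ φ u
      ≤ ⨅ a : {a : ℝ // 0 < a}, C * (ENNReal.ofReal ((a : ℝ))⁻¹ *
          (1 + orliczModular μ ψ (fun ω => (a : ℝ) • u ω))) := le_iInf main
    _ = C * amemiyaNorm μ ψ u := (ENNReal.mul_iInf_of_ne hC0 hCtop).symm
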